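/- For all natural numbers n, H ≥ 1 and any tuples τ_1, …, τ_H, τ_∞ ∈ ℕ^n, there exist finite nonempty subsets A_1, …, A_n of the integers ℤ such that: (a) for each 1 ≤ h ≤ H and all 1 ≤ j, k ≤ n, |hA_j| ≤ |hA_k| if and only if τ_h(j) ≤ τ_h(k); and (b) for every natural number h > H and all 1 ≤ j, k ≤ n, |hA_j| ≤ |hA_k| if and only if τ_∞(j) ≤ τ_∞(k). -/

import Mathlib

open Pointwise

namespace ExtThmAux

open Finset

lemma add_single (X : Finset ℤ) (c : ℤ) : X + {c} = X.image (· + c) := by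
  ext x
  simp only [Finset.mem_add, Finset.mem_image, Finset.mem_singleton]
  constructor
  · rintro ⟨y, hy, z, rfl, rfl⟩; exact ⟨y, hy, rfl⟩
  · rintro ⟨y, hy, rfl⟩; exact ⟨y, hy, c, rfl, rfl⟩

lemma pair_nsmul (s : ℤ) :
    ∀ h : ℕ, h • ({0, s} : Finset ℤ) = (Finset.Icc (0:ℤ) (h:ℤ)).image (· * s)
  | 0 => by simp [zero_nsmul]; rfl
  | (h+1) => by
    rw [succ_nsmul, pair_nsmul s h]
    ext x
    simp only [Finset.mem_add, Finset.mem_image, Finset.mem_Icc, Finset.mem_insert,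
      Finset.mem_singleton]
    constructor
    · rintro ⟨y, ⟨i, ⟨hi0, hih⟩, rfl⟩, z, hz, rfl⟩
      rcases hz with rfl | rfl
      · exact ⟨i, ⟨hi0, by push_cast; omega⟩, by ring⟩
      · exact ⟨i+1, ⟨by omega, by push_cast; omega⟩, by ring⟩
    · rintro ⟨i, ⟨hi0, hih⟩, rfl⟩
      by_cases hc : i ≤ (h:ℤ)
      · exact ⟨i*s, ⟨i, ⟨hi0, hc⟩, rfl⟩, 0, Or.inl rfl, by ring⟩
      · refine ⟨(i-1)*s, ⟨i-1, ⟨by push_cast at hih ⊢; omega, by push_cast at hih ⊢; omega⟩, rfl⟩,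
          s, Or.inr rfl, by ring⟩

lemma merge_interval (M s : ℤ) (hM : 0 ≤ M) (hs : 1 ≤ s) (hsM : s ≤ M + 1) :
    ∀ h : ℕ, Finset.Icc (0:ℤ) M + h • ({0, s} : Finset ℤ) = Finset.Icc 0 (M + h * s)
  | 0 => by simp [zero_nsmul]
  | (h+1) => by
    have hrec := merge_interval M s hM hs hsM h
    have hc0 : 0 ≤ (h:ℤ) * s := mul_nonneg (by positivity) (by omega)
    have hrw : ((h+1:ℕ):ℤ) * s = (h:ℤ) * s + s := by push_cast; ring
    rw [succ_nsmul, ← add_assoc, hrec, hrw]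
    generalize hg : (h:ℤ) * s = c at hc0 ⊢
    ext x
    simp only [Finset.mem_add, Finset.mem_Icc, Finset.mem_insert, Finset.mem_singleton]
    constructor
    · rintro ⟨y, hy, z, hz, rfl⟩
      rcases hz with rfl | rfl <;> omega
    · rintro ⟨h0x, hx⟩
      by_cases hcase : x ≤ M + c
      · exact ⟨x, ⟨h0x, hcase⟩, 0, Or.inl rfl, by ring⟩
      · exact ⟨x - s, ⟨by omega, by omega⟩, s, Or.inr rfl, by ring⟩

lemma unmerged_card (D s : ℤ) (hD : 0 ≤ D) (hs : D < s) (X : Finset ℤ)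
    (hX : X ⊆ Finset.Icc 0 D) :
    ∀ h : ℕ, (X + h • ({0, s} : Finset ℤ) ⊆ Finset.Icc 0 (D + h * s)) ∧
      (X + h • ({0, s} : Finset ℤ)).card = (h+1) * X.card
  | 0 => by
    rw [zero_nsmul]
    constructor
    · simpa using hX
    · simp
  | (h+1) => by
    obtain ⟨hsub, hcard⟩ := unmerged_card D s hD hs X hX h
    have hc0 : 0 ≤ (h:ℤ) * s := mul_nonneg (by positivity) (by omega)
    have hrw : ((h+1:ℕ):ℤ) * s = (h:ℤ) * s + s := by push_cast; ring
    have hsplit : (h+1) • ({0, s} : Finset ℤ)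
        = h • ({0, s} : Finset ℤ) ∪ {((h+1:ℕ):ℤ) * s} := by
      rw [pair_nsmul, pair_nsmul]
      have hI : Finset.Icc (0:ℤ) ((h+1:ℕ):ℤ) = Finset.Icc (0:ℤ) (h:ℤ) ∪ {((h+1:ℕ):ℤ)} := by
        ext y; simp only [Finset.mem_Icc, Finset.mem_union, Finset.mem_singleton]
        push_cast; omega
      rw [hI, Finset.image_union, Finset.image_singleton]
    rw [hsplit, Finset.add_union]
    have hsub2 : X + {((h+1:ℕ):ℤ) * s}
        ⊆ Finset.Icc (((h+1:ℕ):ℤ) * s) (D + ((h+1:ℕ):ℤ) * s) := by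
      rw [add_single]
      intro x hx
      simp only [Finset.mem_image] at hx
      obtain ⟨y, hy, rfl⟩ := hx
      have := Finset.mem_Icc.mp (hX hy)
      simp only [Finset.mem_Icc]
      omega
    have hdisj : Disjoint (X + h • ({0, s} : Finset ℤ)) (X + {((h+1:ℕ):ℤ) * s}) := by
      rw [Finset.disjoint_left]
      intro x hx1 hx2
      have h1 := Finset.mem_Icc.mp (hsub hx1)
      have h2 := Finset.mem_Icc.mp (hsub2 hx2)
      rw [hrw] at h2
      omega
    refine ⟨?_, ?_⟩
    · apply Finset.union_subset
      · refine hsub.trans ?_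
        apply Finset.Icc_subset_Icc le_rfl
        rw [hrw]; omega
      · refine hsub2.trans ?_
        apply Finset.Icc_subset_Icc ?_ le_rfl
        rw [hrw]; omega
    · rw [Finset.card_union_of_disjoint hdisj, hcard, add_single,
        Finset.card_image_of_injective _ (add_left_injective _)]
      ring

lemma nsmul_sum' (h m : ℕ) (f : ℕ → Finset ℤ) :
    h • (∑ t ∈ Finset.range m, f t) = ∑ t ∈ Finset.range m, h • f t := by
  induction m with
  | zero => simp [nsmul_zero]
  | succ m ih => rw [Finset.sum_range_succ, Finset.sum_range_succ, nsmul_add, ih]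

lemma nsmul_Icc (h : ℕ) (a : ℕ) :
    h • (Finset.Icc (0:ℤ) (a:ℤ)) = Finset.Icc 0 ((h*a : ℕ) : ℤ) := by
  induction h with
  | zero => rw [zero_nsmul]; norm_num; rfl
  | succ h ih =>
    rw [succ_nsmul, ih]
    have : Finset.Icc (0:ℤ) ((h*a : ℕ):ℤ) + Finset.Icc (0:ℤ) (a:ℤ)
        = Finset.Icc (0:ℤ) (((h*a : ℕ):ℤ) + (a:ℤ)) := by
      ext x
      simp only [Finset.mem_add, Finset.mem_Icc]
      constructor
      · rintro ⟨y, hy, z, hz, rfl⟩; omega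
      · rintro ⟨h0, hx⟩
        refine ⟨min x ((h*a:ℕ):ℤ), ⟨?_, ?_⟩, x - min x ((h*a:ℕ):ℤ), ⟨?_, ?_⟩, ?_⟩ <;> omega
    rw [this]
    congr 1
    push_cast; ring

lemma card_IccN (N : ℕ) : (Finset.Icc (0:ℤ) (N:ℤ)).card = N + 1 := by
  rw [Int.card_Icc]; simp

lemma partial_card (w : ℕ → ℕ) (T : ℕ)
    (hw1 : ∀ t, t < T → (t+2) * w t < w (t+1))
    (hw2 : ∀ t, t < T → w (t+1) ≤ (t+3) * w t)
    (h : ℕ) (h1 : 1 ≤ h) :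
    ∀ t : ℕ, t ≤ T →
      (Finset.Icc (0:ℤ) ((h * w 0 : ℕ):ℤ)
          + ∑ t' ∈ Finset.range t, h • ({0, ((w (t'+1) - w t' : ℕ) : ℤ)} : Finset ℤ)
        ⊆ Finset.Icc 0 ((h * w t : ℕ):ℤ))
      ∧ (Finset.Icc (0:ℤ) ((h * w 0 : ℕ):ℤ)
          + ∑ t' ∈ Finset.range t, h • ({0, ((w (t'+1) - w t' : ℕ) : ℤ)} : Finset ℤ)).card
          = (h * w (min t (h-1)) + 1) * (h+1)^(t - (h-1))
      ∧ (t + 1 ≤ h → Finset.Icc (0:ℤ) ((h * w 0 : ℕ):ℤ)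
          + ∑ t' ∈ Finset.range t, h • ({0, ((w (t'+1) - w t' : ℕ) : ℤ)} : Finset ℤ)
            = Finset.Icc 0 ((h * w t : ℕ):ℤ)) := by
  intro t
  induction t with
  | zero =>
    intro _
    rw [Finset.sum_range_zero, add_zero]
    refine ⟨subset_rfl, ?_, fun _ => rfl⟩
    rw [card_IccN]
    simp
  | succ t ih =>
    intro htT
    obtain ⟨ih1, ih2, ih3⟩ := ih (by omega)
    have hwlt : w t < w (t+1) := by
      have e0 : w t ≤ (t+2) * w t := Nat.le_mul_of_pos_left _ (by omega)
      have := hw1 t (by omega)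
      omega
    set s : ℕ := w (t+1) - w t with hs_def
    have hspos : 1 ≤ s := by omega
    have hNat : h * w t + h * s = h * w (t+1) := by
      have e : w t + s = w (t+1) := by omega
      calc h * w t + h * s = h * (w t + s) := by ring
        _ = h * w (t+1) := by rw [e]
    have hZspan : ((h * w t : ℕ):ℤ) + (h:ℤ) * ((s:ℕ):ℤ) = ((h * w (t+1) : ℕ):ℤ) := by
      push_cast
      exact_mod_cast congrArg (Nat.cast : ℕ → ℤ) hNat
    rw [Finset.sum_range_succ, ← add_assoc]
    by_cases hcase : t + 2 ≤ h
    · -- merged regime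
      have hXt := ih3 (by omega)
      have hsle : s ≤ h * w t + 1 := by
        have e1 := hw2 t (by omega)
        have e2 : (t+3) * w t = (t+2) * w t + w t := by ring
        have e3 : (t+2) * w t ≤ h * w t := mul_le_mul_left (by omega) _
        omega
      have hmerge := merge_interval ((h * w t : ℕ):ℤ) (s:ℤ) (by positivity)
        (by exact_mod_cast hspos) (by exact_mod_cast hsle) h
      rw [hXt, hmerge, hZspan]
      refine ⟨subset_rfl, ?_, fun _ => rfl⟩
      rw [card_IccN]
      have e4 : min (t+1) (h-1) = t + 1 := by omega
      have e5 : (t+1) - (h-1) = 0 := by omega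
      rw [e4, e5, pow_zero, mul_one]
    · -- unmerged regime
      have hsgt : h * w t < s := by
        have e1 := hw1 t (by omega)
        have e2 : (t+2) * w t = (t+1) * w t + w t := by ring
        have e3 : h * w t ≤ (t+1) * w t := mul_le_mul_left (by omega) _
        omega
      obtain ⟨hsub, hcard⟩ := unmerged_card ((h * w t : ℕ):ℤ) (s:ℤ) (by positivity)
        (by exact_mod_cast hsgt) _ ih1 h
      rw [hZspan] at hsub
      refine ⟨hsub, ?_, fun hcon => absurd hcon (by omega)⟩
      rw [hcard, ih2]
      have e4 : min (t+1) (h-1) = h - 1 := by omega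
      have e5 : min t (h-1) = h - 1 := by omega
      have e6 : (t+1) - (h-1) = (t - (h-1)) + 1 := by omega
      rw [e4, e5, e6, pow_succ]
      ring

def betaS (n B0 : ℕ) : ℕ → ℕ
  | 0 => B0
  | (t+1) => (t+3) * betaS n B0 t - n

lemma betaS_ge (n B0 : ℕ) (hn : n ≤ B0) : ∀ t, B0 ≤ betaS n B0 t
  | 0 => le_rfl
  | (t+1) => by
    have ih := betaS_ge n B0 hn t
    have e : 3 * betaS n B0 t ≤ (t+3) * betaS n B0 t := mul_le_mul_left (by omega) _
    show B0 ≤ (t+3) * betaS n B0 t - n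
    omega

lemma betaS_succ (n B0 : ℕ) (hn : n ≤ B0) (t : ℕ) :
    betaS n B0 (t+1) + n = (t+3) * betaS n B0 t := by
  have ih := betaS_ge n B0 hn t
  have e : 3 * betaS n B0 t ≤ (t+3) * betaS n B0 t := mul_le_mul_left (by omega) _
  show (t+3) * betaS n B0 t - n + n = (t+3) * betaS n B0 t
  omega

def rk (n : ℕ) (f : Fin n → ℕ) (j : Fin n) : ℕ :=
  (Finset.univ.filter fun i => f i < f j).card

lemma rk_le_n (n : ℕ) (f : Fin n → ℕ) (j : Fin n) : rk n f j ≤ n := by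
  refine (Finset.card_filter_le _ _).trans ?_
  simp

lemma rk_le_iff (n : ℕ) (f : Fin n → ℕ) (j k : Fin n) :
    rk n f j ≤ rk n f k ↔ f j ≤ f k := by
  constructor
  · intro hle
    by_contra hcon
    push_neg at hcon
    have hss : (Finset.univ.filter fun i => f i < f k)
        ⊂ (Finset.univ.filter fun i => f i < f j) := by
      refine Finset.ssubset_iff_of_subset ?_ |>.mpr ?_
      · intro i hi
        simp only [Finset.mem_filter, Finset.mem_univ, true_and] at hi ⊢
        omega
      · exact ⟨k, by simp [hcon], by simp⟩
    have := Finset.card_lt_card hss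
    unfold rk at hle
    omega
  · intro hle
    apply Finset.card_le_card
    intro i hi
    simp only [Finset.mem_filter, Finset.mem_univ, true_and] at hi ⊢
    omega

lemma key_iff (h E a b : ℕ) (h1 : 1 ≤ h) (hE : 1 ≤ E) :
    (h*a+1)*E ≤ (h*b+1)*E ↔ a ≤ b := by
  constructor
  · intro hle
    have h2 : h*a+1 ≤ h*b+1 := Nat.le_of_mul_le_mul_right hle (by omega)
    have h3 : h*a ≤ h*b := by omega
    exact Nat.le_of_mul_le_mul_left h3 (by omega)
  · intro hab
    gcongr

lemma key_iff' (h a b : ℕ) (h1 : 1 ≤ h) : h*a+1 ≤ h*b+1 ↔ a ≤ b := by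
  have := key_iff h 1 a b h1 le_rfl
  simpa using this

def Tt (n H : ℕ) (τ : Fin H → Fin n → ℕ) (τinf : Fin n → ℕ) (t : ℕ) (j : Fin n) : ℕ :=
  if ht : t < H then τ ⟨t, ht⟩ j else τinf j

def wf (n H : ℕ) (τ : Fin H → Fin n → ℕ) (τinf : Fin n → ℕ) (j : Fin n) (t : ℕ) : ℕ :=
  betaS n ((H+3)*(n+1)) t + rk n (Tt n H τ τinf t) j

lemma wf_hw1 (n H : ℕ) (τ : Fin H → Fin n → ℕ) (τinf : Fin n → ℕ) (j : Fin n) :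
    ∀ t, t < H → (t+2) * wf n H τ τinf j t < wf n H τ τinf j (t+1) := by
  intro t ht
  have hn : n ≤ (H+3)*(n+1) := by nlinarith
  have hb1 : (H+3)*(n+1) ≤ betaS n ((H+3)*(n+1)) t := betaS_ge n _ hn t
  have hb2 := betaS_succ n ((H+3)*(n+1)) hn t
  have hr1 : rk n (Tt n H τ τinf t) j ≤ n := rk_le_n n _ j
  unfold wf
  set β := betaS n ((H+3)*(n+1))
  have e1 : (t+2)*(β t + rk n (Tt n H τ τinf t) j)
      = (t+2)*β t + (t+2)*rk n (Tt n H τ τinf t) j := by ring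
  have e2 : (t+2)*rk n (Tt n H τ τinf t) j ≤ (t+2)*n := mul_le_mul_right hr1 _
  have e4 : (t+3)*β t = (t+2)*β t + β t := by ring
  have e5 : (t+3)*n ≤ (H+3)*n := mul_le_mul_left (by omega) _
  have e6 : (H+3)*(n+1) = (H+3)*n + (H+3) := by ring
  have e7 : (t+2)*n + n = (t+3)*n := by ring
  omega

lemma wf_hw2 (n H : ℕ) (τ : Fin H → Fin n → ℕ) (τinf : Fin n → ℕ) (j : Fin n) :
    ∀ t, t < H → wf n H τ τinf j (t+1) ≤ (t+3) * wf n H τ τinf j t := by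
  intro t _
  have hn : n ≤ (H+3)*(n+1) := by nlinarith
  have hb2 := betaS_succ n ((H+3)*(n+1)) hn t
  have hr1 : rk n (Tt n H τ τinf (t+1)) j ≤ n := rk_le_n n _ j
  unfold wf
  set β := betaS n ((H+3)*(n+1))
  have e1 : (t+3)*β t ≤ (t+3)*(β t + rk n (Tt n H τ τinf t) j) := mul_le_mul_right (by omega) _
  omega

noncomputable def Aset (n H : ℕ) (τ : Fin H → Fin n → ℕ) (τinf : Fin n → ℕ) (j : Fin n) : Finset ℤ :=
  Finset.Icc 0 ((wf n H τ τinf j 0 : ℕ):ℤ)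
    + ∑ t ∈ Finset.range H,
        ({0, ((wf n H τ τinf j (t+1) - wf n H τ τinf j t : ℕ):ℤ)} : Finset ℤ)

lemma sum_pairs_nonempty (m : ℕ) (f : ℕ → Finset ℤ) (hf : ∀ t, (f t).Nonempty) :
    (∑ t ∈ Finset.range m, f t).Nonempty := by
  induction m with
  | zero => exact ⟨0, by simp⟩
  | succ m ih =>
    rw [Finset.sum_range_succ]
    exact ih.add (hf m)

lemma Aset_nonempty (n H : ℕ) (τ : Fin H → Fin n → ℕ) (τinf : Fin n → ℕ) (j : Fin n) :
    (Aset n H τ τinf j).Nonempty := by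
  unfold Aset
  refine Finset.Nonempty.add ?_ (sum_pairs_nonempty _ _ fun t => ⟨0, by simp⟩)
  exact Finset.nonempty_Icc.mpr (by positivity)

lemma cardA (n H : ℕ) (τ : Fin H → Fin n → ℕ) (τinf : Fin n → ℕ) (j : Fin n)
    (h : ℕ) (h1 : 1 ≤ h) :
    (h • Aset n H τ τinf j).card
      = (h * wf n H τ τinf j (min H (h-1)) + 1) * (h+1)^(H - (h-1)) := by
  unfold Aset
  rw [nsmul_add, nsmul_sum', nsmul_Icc]
  exact (partial_card (wf n H τ τinf j) H (wf_hw1 n H τ τinf j) (wf_hw2 n H τ τinf j)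
    h h1 H le_rfl).2.1

end ExtThmAux

open ExtThmAux in
/-- **Theorem 2.** For all `n, H ≥ 1` and tuples `τ_1, …, τ_H, τ_∞ ∈ ℕ^n`, there exist
finite nonempty subsets `A_1, …, A_n ⊆ ℤ` such that for each `1 ≤ h ≤ H` the quantities
`|hA_1|, …, |hA_n|` have the same relative order (including equalities) as `τ_h`, and for
every `h > H` they have the same relative order as `τ_∞`. -/
theorem extension_theorem (n H : ℕ) (hn : 1 ≤ n) (hH : 1 ≤ H)
    (τ : Fin H → (Fin n → ℕ)) (τinf : Fin n → ℕ) :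
    ∃ A : Fin n → Finset ℤ,
      (∀ k, (A k).Nonempty) ∧
      (∀ h : ℕ, ∀ h1 : 1 ≤ h, ∀ hhH : h ≤ H, ∀ j k : Fin n,
        (h • A j).card ≤ (h • A k).card ↔
          τ ⟨h - 1, by omega⟩ j ≤ τ ⟨h - 1, by omega⟩ k) ∧
      (∀ h : ℕ, H < h → ∀ j k : Fin n,
        (h • A j).card ≤ (h • A k).card ↔ τinf j ≤ τinf k) := by
  refine ⟨Aset n H τ τinf, Aset_nonempty n H τ τinf, ?_, ?_⟩
  · intro h h1 hhH j k
    rw [cardA n H τ τinf j h h1, cardA n H τ τinf k h h1]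
    have hmin : min H (h-1) = h - 1 := by omega
    rw [hmin]
    rw [key_iff _ _ _ _ h1 (Nat.one_le_pow _ _ (by omega))]
    unfold wf
    rw [add_le_add_iff_left, rk_le_iff]
    have hT : ∀ i : Fin n, Tt n H τ τinf (h-1) i = τ ⟨h-1, by omega⟩ i := by
      intro i
      unfold Tt
      rw [dif_pos (show h - 1 < H by omega)]
    rw [hT j, hT k]
  · intro h hHh j k
    rw [cardA n H τ τinf j h (by omega), cardA n H τ τinf k h (by omega)]
    have hmin : min H (h-1) = H := by omega
    have hexp : H - (h-1) = 0 := by omega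
    rw [hmin, hexp, pow_zero, mul_one, mul_one]
    rw [key_iff' _ _ _ (by omega)]
    unfold wf
    rw [add_le_add_iff_left, rk_le_iff]
    have hT : ∀ i : Fin n, Tt n H τ τinf H i = τinf i := by
      intro i
      unfold Tt
      rw [dif_neg (lt_irrefl H)]
    rw [hT j, hT k]
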